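/- With the Gaussian model (r = 2) as above, ∂₂₂f(0,0) = 1/σ_α² + 1/σ_b² - 1/σ_p², and consequently ∂₂₂f(0,0) > ∂₁₁f(0,0) if and only if 1/σ_b² > 1/σ_p², i.e. exactly when the stability condition σ_p > σ_b holds. -/

import Mathlib

open Real

lemma aux_deriv (c d : ℝ) :
    deriv (deriv (fun x : ℝ => Real.exp (c * x ^ 2) - Real.exp (d * x ^ 2))) 0
      = 2 * c - 2 * d := by
  have hd : ∀ x : ℝ, HasDerivAt (fun x : ℝ => Real.exp (c * x ^ 2) - Real.exp (d * x ^ 2))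
      (Real.exp (c * x ^ 2) * (c * (2 * x ^ 1)) - Real.exp (d * x ^ 2) * (d * (2 * x ^ 1))) x := by
    intro x
    exact (((hasDerivAt_pow 2 x).const_mul c).exp).sub (((hasDerivAt_pow 2 x).const_mul d).exp)
  have h1 : deriv (fun x : ℝ => Real.exp (c * x ^ 2) - Real.exp (d * x ^ 2))
      = fun x => Real.exp (c * x ^ 2) * (c * (2 * x ^ 1)) - Real.exp (d * x ^ 2) * (d * (2 * x ^ 1)) := by
    funext x; exact (hd x).deriv
  rw [h1]
  have hc := ((((hasDerivAt_pow 2 (0:ℝ)).const_mul c).exp).mul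
    (((hasDerivAt_pow 1 (0:ℝ)).const_mul 2).const_mul c))
  have hdd := ((((hasDerivAt_pow 2 (0:ℝ)).const_mul d).exp).mul
    (((hasDerivAt_pow 1 (0:ℝ)).const_mul 2).const_mul d))
  have h2 := (hc.sub hdd).deriv
  simp at h2
  simp only [pow_one]
  refine Eq.trans h2 ?_
  ring

theorem gaussian_second_derivative_second_variable
    (sb sa sp : ℝ) (hsb : 0 < sb) (hsa : 0 < sa) (hsp : 0 < sp)
    (f : ℝ → ℝ → ℝ)
    (hf : ∀ y x : ℝ, f y x = exp (-(y ^ 2) / (2 * sb ^ 2)) -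
      exp (-((y - x) ^ 2) / (2 * sa ^ 2)) * exp (-(x ^ 2) / (2 * sb ^ 2)) *
        exp (-(y ^ 2) / (2 * sp ^ 2)) / exp (-(x ^ 2) / (2 * sp ^ 2))) :
    deriv (deriv (fun x => f 0 x)) 0 = 1 / sa ^ 2 + 1 / sb ^ 2 - 1 / sp ^ 2 ∧
    (deriv (deriv (fun x => f 0 x)) 0 > deriv (deriv (fun y => f y 0)) 0
      ↔ 1 / sb ^ 2 > 1 / sp ^ 2) := by
  have hb2 : sb ^ 2 ≠ 0 := by positivity
  have ha2 : sa ^ 2 ≠ 0 := by positivity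
  have hp2 : sp ^ 2 ≠ 0 := by positivity
  have e1 : (fun x => f 0 x) = fun x : ℝ =>
      Real.exp ((0 : ℝ) * x ^ 2) - Real.exp ((-(1/(2*sa^2)) - 1/(2*sb^2) + 1/(2*sp^2)) * x ^ 2) := by
    funext x
    rw [hf, ← Real.exp_add, ← Real.exp_add, ← Real.exp_sub]
    congr 1
    · field_simp; simp
    · field_simp; ring
  have e2 : (fun y => f y 0) = fun y : ℝ =>
      Real.exp ((-(1/(2*sb^2))) * y ^ 2) - Real.exp ((-(1/(2*sa^2)) - 1/(2*sp^2)) * y ^ 2) := by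
    funext y
    rw [hf, ← Real.exp_add, ← Real.exp_add, ← Real.exp_sub]
    congr 1
    · field_simp
    · congr 1; field_simp; ring
  rw [e1, e2, aux_deriv, aux_deriv]
  constructor
  · field_simp; ring
  · have kb : (1:ℝ)/(2*sb^2) = (1/sb^2)/2 := by ring
    have kp : (1:ℝ)/(2*sp^2) = (1/sp^2)/2 := by ring
    have ka : (1:ℝ)/(2*sa^2) = (1/sa^2)/2 := by ring
    rw [kb, kp, ka]
    constructor <;> intro h <;> linarith
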